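/- Let G be a diamond-free graph, let C' = {v_1, ..., v_ℓ} be a clique with ℓ ≥ 2, and let C_1, ..., C_ℓ be pairwise disjoint maximal cliques with C_i ∩ C' = {v_i} and |C_i| ≥ ℓ for all i. If moreover max_i |C_i| > ℓ, then there exists a stable set S ⊆ ∪_{i=1}^ℓ C_i of size ℓ disjoint from C' such that every vertex of C' has a neighbor in S. -/

import Mathlib

def DiamondFree {V : Type*} (G : SimpleGraph V) : Prop :=
  ¬ ∃ a b c d : V, a ≠ b ∧ a ≠ c ∧ a ≠ d ∧ b ≠ c ∧ b ≠ d ∧ c ≠ d ∧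
    G.Adj a b ∧ G.Adj a c ∧ G.Adj a d ∧ G.Adj b c ∧ G.Adj b d ∧ ¬ G.Adj c d

/-- if moreover some C_i has more than ℓ vertices, there is a stable set of
size ℓ disjoint from C' dominating all of C'. -/
theorem stmt9 {V : Type*} [DecidableEq V] (G : SimpleGraph V) (hdf : DiamondFree G)
    (ℓ : ℕ) (hℓ : 2 ≤ ℓ) (v : Fin ℓ → V) (hv : Function.Injective v)
    (C' : Finset V) (hC'v : C' = Finset.image v Finset.univ) (hC' : G.IsClique ↑C')
    (C : Fin ℓ → Finset V)
    (hcl : ∀ i, G.IsClique ↑(C i))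
    (hmax : ∀ i, ∀ D : Finset V, G.IsClique ↑D → C i ⊆ D → C i = D)
    (hint : ∀ i, C i ∩ C' = {v i})
    (hcard : ∀ i, ℓ ≤ (C i).card)
    (hdisj : ∀ i j, i ≠ j → Disjoint (C i) (C j))
    (hbig : ∃ i, ℓ < (C i).card) :
    ∃ S : Finset V, (∀ x ∈ S, ∃ i, x ∈ C i) ∧ Disjoint S C' ∧
      (∀ x ∈ S, ∀ y ∈ S, ¬ G.Adj x y) ∧ S.card = ℓ ∧
      (∀ x ∈ C', ∃ s ∈ S, G.Adj s x) := by
  classical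
  -- v i ∈ C i
  have hvC : ∀ i, v i ∈ C i := by
    intro i
    have : v i ∈ C i ∩ C' := by rw [hint i]; exact Finset.mem_singleton_self _
    exact (Finset.mem_inter.mp this).1
  -- Key: a vertex outside C i has at most one neighbor in C i
  have key : ∀ (i : Fin ℓ) (x : V), x ∉ C i →
      ((C i).filter (fun y => G.Adj x y)).card ≤ 1 := by
    intro i x hx
    by_contra h
    push_neg at h
    obtain ⟨a, ha, b, hb, hab⟩ := Finset.one_lt_card.mp h
    rw [Finset.mem_filter] at ha hb
    have hc : ∃ c ∈ C i, ¬ G.Adj x c := by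
      by_contra hc
      push_neg at hc
      have hclq : G.IsClique ↑(insert x (C i)) := by
        rw [Finset.coe_insert]
        exact (hcl i).insert (fun y hy _ => hc y hy)
      have heq := hmax i _ hclq (Finset.subset_insert _ _)
      have : x ∈ C i := by rw [heq]; exact Finset.mem_insert_self _ _
      exact hx this
    obtain ⟨c, hcC, hxc⟩ := hc
    have hax : a ≠ x := fun h => hx (h ▸ ha.1)
    have hbx : b ≠ x := fun h => hx (h ▸ hb.1)
    have hac : a ≠ c := fun h => hxc (h ▸ ha.2)
    have hbc : b ≠ c := fun h => hxc (h ▸ hb.2)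
    have hXc : x ≠ c := fun h => hx (h ▸ hcC)
    exact hdf ⟨a, b, x, c, hab, hax, hac, hbx, hbc, hXc,
      hcl i ha.1 hb.1 hab, ha.2.symm, hcl i ha.1 hcC hac,
      hb.2.symm, hcl i hb.1 hcC hbc, hxc⟩
  -- Extension step
  have ext : ∀ (T : Finset (Fin ℓ)) (f : Fin ℓ → V) (i : Fin ℓ),
      (∀ j ∈ T, f j ∈ C j) → T.card + 1 < (C i).card → i ∉ T →
      ∃ x ∈ C i, x ≠ v i ∧ ∀ j ∈ T, ¬ G.Adj x (f j) := by
    intro T f i hf hTc hiT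
    set F : Finset V :=
      insert (v i) (T.biUnion (fun j => (C i).filter (fun y => G.Adj (f j) y))) with hF
    have hFcard : F.card ≤ T.card + 1 := by
      have h1 : (T.biUnion (fun j => (C i).filter (fun y => G.Adj (f j) y))).card ≤
          T.card * 1 := by
        apply Finset.card_biUnion_le_card_mul
        intro j hj
        apply key i (f j)
        intro hmem
        have hji : j ≠ i := fun h => hiT (h ▸ hj)
        exact (Finset.disjoint_left.mp (hdisj j i hji)) (hf j hj) hmem
      have := Finset.card_insert_le (v i)
        (T.biUnion (fun j => (C i).filter (fun y => G.Adj (f j) y)))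
      rw [← hF] at this
      omega
    have hne : ((C i) \ F).Nonempty := by
      rw [Finset.sdiff_nonempty]
      intro hsub
      have := Finset.card_le_card hsub
      omega
    obtain ⟨x, hx⟩ := hne
    rw [Finset.mem_sdiff] at hx
    refine ⟨x, hx.1, ?_, ?_⟩
    · intro h
      exact hx.2 (h ▸ Finset.mem_insert_self _ _)
    · intro j hj hadj
      apply hx.2
      apply Finset.mem_insert_of_mem
      exact Finset.mem_biUnion.mpr ⟨j, hj, Finset.mem_filter.mpr ⟨hx.1, hadj.symm⟩⟩
  obtain ⟨i₀, hi₀⟩ := hbig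
  -- Build a partial stable transversal avoiding i₀
  have buildA : ∀ (T : Finset (Fin ℓ)), i₀ ∉ T →
      ∃ f : Fin ℓ → V, (∀ j ∈ T, f j ∈ C j ∧ f j ≠ v j) ∧
        (∀ j ∈ T, ∀ k ∈ T, j ≠ k → ¬ G.Adj (f j) (f k)) := by
    intro T
    induction T using Finset.induction with
    | empty => exact fun _ => ⟨v, by simp, by simp⟩
    | @insert i T' hiT' ih =>
      intro h0
      have hii0 : i ≠ i₀ := fun h => h0 (h ▸ Finset.mem_insert_self _ _)
      have hi0T' : i₀ ∉ T' := fun h => h0 (Finset.mem_insert_of_mem h)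
      obtain ⟨f, hf1, hf2⟩ := ih hi0T'
      have hTcard : T'.card + 2 ≤ ℓ := by
        have hsub : insert i₀ (insert i T') ⊆ (Finset.univ : Finset (Fin ℓ)) :=
          Finset.subset_univ _
        have hc1 := Finset.card_le_card hsub
        rw [Finset.card_insert_of_notMem h0, Finset.card_insert_of_notMem hiT'] at hc1
        simp at hc1; omega
      obtain ⟨x, hxC, hxv, hxadj⟩ := ext T' f i (fun j hj => (hf1 j hj).1)
        (by have := hcard i; omega) hiT'
      refine ⟨Function.update f i x, ?_, ?_⟩
      · intro j hj
        rcases Finset.mem_insert.mp hj with rfl | hj'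
        · rw [Function.update_self]; exact ⟨hxC, hxv⟩
        · have hji : j ≠ i := fun h => hiT' (h ▸ hj')
          rw [Function.update_of_ne hji]
          exact hf1 j hj'
      · intro j hj k hk hjk
        rcases Finset.mem_insert.mp hj with rfl | hj' <;>
          rcases Finset.mem_insert.mp hk with rfl | hk'
        · exact absurd rfl hjk
        · have hki : k ≠ j := hjk.symm
          rw [Function.update_self, Function.update_of_ne hki]
          exact hxadj k hk'
        · have hji : j ≠ k := hjk
          rw [Function.update_self, Function.update_of_ne hji]
          exact fun h => hxadj j hj' h.symm
        · have hji : j ≠ i := fun h => hiT' (h ▸ hj')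
          have hki : k ≠ i := fun h => hiT' (h ▸ hk')
          rw [Function.update_of_ne hji, Function.update_of_ne hki]
          exact hf2 j hj' k hk' hjk
  obtain ⟨f, hf1, hf2⟩ := buildA (Finset.univ \ {i₀}) (by simp)
  have hTcard : (Finset.univ \ {i₀} : Finset (Fin ℓ)).card = ℓ - 1 := by
    rw [Finset.card_sdiff_of_subset (by simp)]
    simp
  obtain ⟨x, hxC, hxv, hxadj⟩ := ext (Finset.univ \ {i₀}) f i₀
    (fun j hj => (hf1 j hj).1) (by omega) (by simp)
  set g : Fin ℓ → V := Function.update f i₀ x with hg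
  have hmemT : ∀ j : Fin ℓ, j ≠ i₀ → j ∈ (Finset.univ \ {i₀} : Finset (Fin ℓ)) := by
    intro j hj; simp [hj]
  have hg1 : ∀ i, g i ∈ C i ∧ g i ≠ v i := by
    intro i
    by_cases hi : i = i₀
    · subst hi; rw [hg, Function.update_self]; exact ⟨hxC, hxv⟩
    · rw [hg, Function.update_of_ne hi]; exact hf1 i (hmemT i hi)
  have hg2 : ∀ i j, i ≠ j → ¬ G.Adj (g i) (g j) := by
    intro i j hij
    by_cases hi : i = i₀ <;> by_cases hj : j = i₀
    · exact absurd (hi.trans hj.symm) hij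
    · subst hi
      rw [hg, Function.update_self, Function.update_of_ne hj]
      exact hxadj j (hmemT j hj)
    · subst hj
      rw [hg, Function.update_self, Function.update_of_ne hi]
      exact fun h => hxadj i (hmemT i hi) h.symm
    · rw [hg, Function.update_of_ne hi, Function.update_of_ne hj]
      exact hf2 i (hmemT i hi) j (hmemT j hj) hij
  have hginj : Function.Injective g := by
    intro i j h
    by_contra hij
    exact (Finset.disjoint_left.mp (hdisj i j hij)) (hg1 i).1 (h ▸ (hg1 j).1)
  refine ⟨Finset.image g Finset.univ, ?_, ?_, ?_, ?_, ?_⟩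
  · intro x hx
    obtain ⟨i, _, rfl⟩ := Finset.mem_image.mp hx
    exact ⟨i, (hg1 i).1⟩
  · rw [Finset.disjoint_left]
    intro a ha ha'
    obtain ⟨i, _, rfl⟩ := Finset.mem_image.mp ha
    have : g i ∈ C i ∩ C' := Finset.mem_inter.mpr ⟨(hg1 i).1, ha'⟩
    rw [hint i, Finset.mem_singleton] at this
    exact (hg1 i).2 this
  · intro a ha b hb
    obtain ⟨i, _, rfl⟩ := Finset.mem_image.mp ha
    obtain ⟨j, _, rfl⟩ := Finset.mem_image.mp hb
    by_cases hij : i = j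
    · subst hij; exact G.irrefl
    · exact hg2 i j hij
  · rw [Finset.card_image_of_injective _ hginj, Finset.card_univ, Fintype.card_fin]
  · intro a ha
    rw [hC'v] at ha
    obtain ⟨i, _, rfl⟩ := Finset.mem_image.mp ha
    exact ⟨g i, Finset.mem_image_of_mem g (Finset.mem_univ i),
      hcl i (hg1 i).1 (hvC i) (hg1 i).2⟩
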